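/- arXiv:2012.15303 — 2 statements merged into one kernel-verified Lean document; each statement's English description precedes it below -/
import Mathlib

section
/- Existence of blockers in free groups: let r ≥ 3 and let F_r be the free group on a set S of r generators. Let u ∈ F_r with word length ‖u‖ ≥ 2. Then there exists a constant C_u > 0 such that for all x, y ∈ F_r ∖ {1} there exists w ∈ F_r with ‖u‖ ≤ ‖w‖ < C_u such that the product x·w·y is reduced, i.e. ‖xwy‖ = ‖x‖ + ‖w‖ + ‖y‖, and w is a u-blocker for (x, y): #_u(xwy) = #_u(x) + #_u(y) and #_{u⁻¹}(xwy) = #_{u⁻¹}(x) + #_{u⁻¹}(y). -/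
/-- The number of (possibly overlapping) occurrences of the word `u` as a contiguous subword
of the word `v`. -/
def occCount {α : Type*} [DecidableEq α] (u v : List α) : ℕ :=
  ((List.range (v.length + 1 - u.length)).filter
    fun i => decide ((v.drop i).take u.length = u)).length

namespace BlockersAux


open List

set_option linter.unusedSectionVars false

variable {β : Type*} [DecidableEq β]

/-- inverse of a letter -/
def linv (a : β × Bool) : β × Bool := (a.1, !a.2)

/-- "no cancellation" relation between adjacent letters -/
def Rr (a b : β × Bool) : Prop := ¬(a.1 = b.1 ∧ a.2 = !b.2)

lemma Rr_iff {a b : β × Bool} : Rr a b ↔ b ≠ linv a := by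
  unfold Rr linv
  constructor
  · rintro h rfl
    exact h ⟨rfl, by simp⟩
  · rintro h ⟨h1, h2⟩
    apply h
    cases a; cases b
    simp_all

lemma linv_linv (a : β × Bool) : linv (linv a) = a := by
  cases a; simp [linv]

lemma Rr_self (a : β × Bool) : Rr a a := by
  simp [Rr]

lemma reduce_eq_self_of_chain' : ∀ {l : List (β × Bool)}, l.Chain' Rr → FreeGroup.reduce l = l
  | [], _ => rfl
  | a :: l, h => by
    rw [List.Chain', List.isChain_cons] at h
    rw [FreeGroup.reduce.cons, reduce_eq_self_of_chain' h.2]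
    cases l with
    | nil => rfl
    | cons b l' =>
      have hr : Rr a b := h.1 b rfl
      exact if_neg hr

lemma chain'_of_reduce_eq_self {l : List (β × Bool)} (h : FreeGroup.reduce l = l) :
    l.Chain' Rr := by
  rw [List.Chain', List.isChain_iff_getElem]
  intro i hi
  by_contra hc
  simp only [Rr, not_not] at hc
  have h1 : i < l.length := by omega
  have h2 : i + 1 < l.length := by omega
  have hb : l.get ⟨i + 1, h2⟩ = ((l.get ⟨i, h1⟩).1, !(l.get ⟨i, h1⟩).2) := by
    obtain ⟨hc1, hc2⟩ := hc
    simp only [List.get_eq_getElem]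
    exact Prod.ext hc1.symm (by rw [hc2]; simp)
  have hdec : l = l.take i ++ ((l.get ⟨i, h1⟩).1, (l.get ⟨i, h1⟩).2)
      :: ((l.get ⟨i, h1⟩).1, !(l.get ⟨i, h1⟩).2) :: l.drop (i + 2) := by
    conv_lhs => rw [← List.take_append_drop i l]
    congr 1
    rw [List.drop_eq_getElem_cons h1, List.drop_eq_getElem_cons h2]
    simp only [List.get_eq_getElem] at hb ⊢
    rw [← hb]
  exact FreeGroup.reduce.not (h.trans hdec)





lemma occCount_eq_card (U V : List β) :
    occCount U V = ((Finset.range (V.length + 1 - U.length)).filter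
      (fun i => (V.drop i).take U.length = U)).card := rfl

lemma occCount_append {U X W Y : List β} {L : ℕ} (hUL : U.length = L) (hL : 1 ≤ L)
    (hblock : ∀ i, X.length < i + L → i < X.length + W.length →
        i + L ≤ X.length + W.length + Y.length →
        ((X ++ W ++ Y).drop i).take L ≠ U) :
    occCount U (X ++ W ++ Y) = occCount U X + occCount U Y := by
  classical
  have hZlen : (X ++ W ++ Y).length = X.length + W.length + Y.length := by simp; omega
  rw [occCount_eq_card, occCount_eq_card, occCount_eq_card, hZlen, hUL]
  have key : (Finset.range (X.length + W.length + Y.length + 1 - L)).filter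
      (fun i => (((X ++ W ++ Y)).drop i).take L = U)
      = ((Finset.range (X.length + 1 - L)).filter (fun i => ((X.drop i).take L = U)))
        ∪ ((Finset.range (Y.length + 1 - L)).filter (fun j => ((Y.drop j).take L = U))).image
            (fun j => X.length + W.length + j) := by
    ext i
    simp only [Finset.mem_union, Finset.mem_filter, Finset.mem_range, Finset.mem_image]
    have hXW : (X ++ W).length = X.length + W.length := by simp
    constructor
    · rintro ⟨hiN, hmatch⟩
      by_cases h1 : i + L ≤ X.length
      · left
        refine ⟨by omega, ?_⟩
        rw [List.append_assoc, List.drop_append_of_le_length (by omega),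
            List.take_append_of_le_length (by simp; omega)] at hmatch
        exact hmatch
      · by_cases h2 : X.length + W.length ≤ i
        · right
          refine ⟨i - (X.length + W.length), ⟨by omega, ?_⟩, by omega⟩
          have hi : i = (X ++ W).length + (i - (X.length + W.length)) := by omega
          rw [hi, List.drop_length_add_append] at hmatch
          exact hmatch
        · exact absurd hmatch (hblock i (by omega) (by omega) (by omega))
    · rintro (⟨hiN, hmatch⟩ | ⟨j, ⟨hjN, hmatch⟩, rfl⟩)
      · refine ⟨by omega, ?_⟩
        rw [List.append_assoc, List.drop_append_of_le_length (by omega),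
            List.take_append_of_le_length (by simp; omega)]
        exact hmatch
      · refine ⟨by omega, ?_⟩
        have hi : X.length + W.length + j = (X ++ W).length + j := by omega
        rw [hi, List.drop_length_add_append]
        exact hmatch
  rw [key, Finset.card_union_of_disjoint, Finset.card_image_of_injective _ (fun a b h => by omega)]
  rw [Finset.disjoint_left]
  rintro i hi1 hi2
  simp only [Finset.mem_filter, Finset.mem_range, Finset.mem_image] at hi1 hi2
  obtain ⟨j, _, rfl⟩ := hi2
  omega

lemma getElem_cons_replicate {a b : β} {n j : ℕ} (h1 : 1 ≤ j) (hj : j < n + 1) :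
    (a :: List.replicate n b)[j]'(by simp; omega) = b := by
  obtain ⟨k, rfl⟩ : ∃ k, j = k + 1 := ⟨j - 1, by omega⟩
  simp

lemma block_aux {X Y V : List (β × Bool)} {c d : β × Bool} {L : ℕ}
    (hVlen : V.length = L) (hL : 2 ≤ L)
    (h0 : V[0]'(by omega) ≠ c)
    (hlc : V[L-1]'(by omega) ≠ c) (hld : V[L-1]'(by omega) ≠ d) :
    ∀ i, X.length < i + L → i < X.length + (d :: List.replicate L c : List (β × Bool)).length →
      i + L ≤ X.length + (d :: List.replicate L c : List (β × Bool)).length + Y.length →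
      ((X ++ (d :: List.replicate L c) ++ Y).drop i).take L ≠ V := by
  intro i h1 h2 h3 heq
  simp only [List.length_cons, List.length_replicate] at h2 h3
  have hZlen : (X ++ (d :: List.replicate L c) ++ Y).length = X.length + (L + 1) + Y.length := by
    simp; omega
  have hgetV : ∀ k, k < L → ∀ (hk1 : k < V.length)
      (hk2 : i + k < (X ++ (d :: List.replicate L c) ++ Y).length),
      V[k] = (X ++ (d :: List.replicate L c) ++ Y)[i + k] := by
    intro k hk hk1 hk2
    rw [List.getElem_of_eq heq.symm hk1]
    simp
  have hZW : ∀ m (hm1 : X.length ≤ m) (hm2 : m < X.length + (L + 1))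
      (hm : m < (X ++ (d :: List.replicate L c) ++ Y).length),
      (X ++ (d :: List.replicate L c) ++ Y)[m]
        = (d :: List.replicate L c : List (β × Bool))[m - X.length]'(by simp; omega) := by
    intro m hm1 hm2 hm
    rw [List.getElem_append_left (by simp; omega), List.getElem_append_right (by omega)]
  by_cases hi : X.length + 1 ≤ i
  · apply h0
    have e0 : V[0]'(by omega) = (X ++ (d :: List.replicate L c) ++ Y)[i + 0]'(by omega) :=
      hgetV 0 (by omega) (by omega) (by omega)
    rw [e0, hZW (i + 0) (by omega) (by omega) (by omega)]
    exact getElem_cons_replicate (by omega) (by omega)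
  · have eL : V[L-1]'(by omega)
        = (d :: List.replicate L c : List (β × Bool))[i + (L-1) - X.length]'(by simp; omega) := by
      rw [hgetV (L-1) (by omega) (by omega) (by omega),
        hZW (i + (L-1)) (by omega) (by omega) (by omega)]
    by_cases hj : i + (L - 1) - X.length = 0
    · apply hld
      rw [eL]
      simp only [hj, List.getElem_cons_zero]
    · apply hlc
      rw [eL]
      exact getElem_cons_replicate (by omega) (by omega)


lemma ne_linv_symm {a b : β × Bool} (h : a ≠ linv b) : b ≠ linv a := by
  intro hb
  exact h (by rw [hb, linv_linv])

lemma chain'_cons_replicate {a b : β × Bool} (n : ℕ) (h : Rr a b) :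
    List.Chain' Rr (a :: List.replicate n b) := by
  induction n generalizing a with
  | zero => exact List.isChain_singleton a
  | succ n ih =>
    rw [List.replicate_succ, List.Chain', List.isChain_cons_cons]
    exact ⟨h, ih (Rr_self b)⟩

lemma card5 {γ : Type*} [DecidableEq γ] (a b c d e : γ) :
    ({a, b, c, d, e} : Finset γ).card ≤ 5 := by
  refine (Finset.card_insert_le _ _).trans (Nat.succ_le_succ ?_)
  refine (Finset.card_insert_le _ _).trans (Nat.succ_le_succ ?_)
  refine (Finset.card_insert_le _ _).trans (Nat.succ_le_succ ?_)
  refine (Finset.card_insert_le _ _).trans (Nat.succ_le_succ ?_)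
  simp

lemma getElem_eq_of_idx {l : List β} {j1 j2 : ℕ} (h : j1 = j2) (h1 : j1 < l.length)
    (h2 : j2 < l.length) : l[j1] = l[j2] := by subst h; rfl

end BlockersAux

open BlockersAux in
/-- Existence of blockers in free groups of rank at least 3: for every `u` of length `≥ 2`
there is a constant `C_u` such that every pair `(x, y)` of nontrivial elements admits a
`u`-blocker `w` with `‖u‖ ≤ ‖w‖ < C_u`. -/
theorem blockers_exist (r : ℕ) (hr : 3 ≤ r) (u : FreeGroup (Fin r))
    (hu : 2 ≤ (FreeGroup.toWord u).length) :
    ∃ Cu : ℕ, 0 < Cu ∧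
      ∀ x y : FreeGroup (Fin r), x ≠ 1 → y ≠ 1 →
        ∃ w : FreeGroup (Fin r),
          (FreeGroup.toWord u).length ≤ (FreeGroup.toWord w).length ∧
          (FreeGroup.toWord w).length < Cu ∧
          -- the product x·w·y is reduced
          (FreeGroup.toWord (x * w * y)).length =
            (FreeGroup.toWord x).length + (FreeGroup.toWord w).length +
              (FreeGroup.toWord y).length ∧
          -- w is a u-blocker for (x, y)
          occCount (FreeGroup.toWord u) (FreeGroup.toWord (x * w * y)) =
            occCount (FreeGroup.toWord u) (FreeGroup.toWord x) +
              occCount (FreeGroup.toWord u) (FreeGroup.toWord y) ∧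
          occCount (FreeGroup.toWord u⁻¹) (FreeGroup.toWord (x * w * y)) =
            occCount (FreeGroup.toWord u⁻¹) (FreeGroup.toWord x) +
              occCount (FreeGroup.toWord u⁻¹) (FreeGroup.toWord y) := by
  classical
  refine ⟨(FreeGroup.toWord u).length + 2, by omega, ?_⟩
  intro x y hx hy
  set U : List (Fin r × Bool) := FreeGroup.toWord u with hUdef
  set L := U.length with hLdef
  have hL2 : 2 ≤ L := hu
  set X : List (Fin r × Bool) := FreeGroup.toWord x with hXdef
  set Y : List (Fin r × Bool) := FreeGroup.toWord y with hYdef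
  have hXne : X ≠ [] := fun h => hx (FreeGroup.toWord_eq_nil_iff.mp h)
  have hYne : Y ≠ [] := fun h => hy (FreeGroup.toWord_eq_nil_iff.mp h)
  have hcard : ∀ s : Finset (Fin r × Bool), s.card ≤ 5 → ∃ a, a ∉ s := by
    intro s hs
    have h6 : 6 ≤ Fintype.card (Fin r × Bool) := by
      rw [Fintype.card_prod, Fintype.card_fin, Fintype.card_bool]; omega
    have hne : (sᶜ).Nonempty := Finset.card_pos.mp (by rw [Finset.card_compl]; omega)
    obtain ⟨a, ha⟩ := hne
    exact ⟨a, by simpa using ha⟩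
  obtain ⟨c, hc⟩ := hcard {U[0]'(by omega), U[L-1]'(by omega), linv (U[0]'(by omega)),
      linv (U[L-1]'(by omega)), linv (Y.head hYne)} (card5 _ _ _ _ _)
  simp only [Finset.mem_insert, Finset.mem_singleton, not_or] at hc
  obtain ⟨hc1, hc2, hc3, hc4, hc5⟩ := hc
  obtain ⟨d, hd⟩ := hcard {U[L-1]'(by omega), linv (U[0]'(by omega)), linv c,
      linv (X.getLast hXne), linv (X.getLast hXne)} (card5 _ _ _ _ _)
  simp only [Finset.mem_insert, Finset.mem_singleton, not_or] at hd
  obtain ⟨hd1, hd2, hd3, hd4, -⟩ := hd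
  set W : List (Fin r × Bool) := d :: List.replicate L c with hWdef
  have hWlen : W.length = L + 1 := by simp [hWdef]
  have hchainW : List.Chain' Rr W :=
    chain'_cons_replicate L (Rr_iff.mpr (ne_linv_symm hd3))
  have hWred : FreeGroup.reduce W = W := reduce_eq_self_of_chain' hchainW
  have hWword : FreeGroup.toWord (FreeGroup.mk W) = W := by
    rw [FreeGroup.toWord_mk, hWred]
  have hWlast : W.getLast? = some c := by
    have hrep : List.replicate L c = List.replicate (L-1) c ++ [c] := by
      conv_lhs => rw [show L = (L-1) + 1 by omega]
      rw [List.replicate_succ']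
    rw [hWdef, hrep, ← List.cons_append, List.getLast?_concat]
  have hchainX : List.Chain' Rr X := chain'_of_reduce_eq_self (FreeGroup.reduce_toWord x)
  have hchainY : List.Chain' Rr Y := chain'_of_reduce_eq_self (FreeGroup.reduce_toWord y)
  have hchainZ : List.Chain' Rr (X ++ W ++ Y) := by
    rw [List.Chain', List.isChain_append, List.isChain_append]
    refine ⟨⟨hchainX, hchainW, ?_⟩, hchainY, ?_⟩
    · intro a ha b hb
      rw [List.getLast?_eq_getLast hXne, Option.mem_def, Option.some_inj] at ha
      have hbd : b = d := by simpa [hWdef, eq_comm] using hb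
      subst ha; subst hbd
      exact Rr_iff.mpr hd4
    · intro a ha b hb
      rw [List.getLast?_append, hWlast] at ha
      simp only [Option.or_some, Option.some_or, Option.mem_def, Option.some_inj] at ha
      rw [List.head?_eq_head hYne, Option.mem_def, Option.some_inj] at hb
      subst ha; subst hb
      exact Rr_iff.mpr (ne_linv_symm hc5)
  have hZred : FreeGroup.reduce (X ++ W ++ Y) = X ++ W ++ Y :=
    reduce_eq_self_of_chain' hchainZ
  have hprod : x * FreeGroup.mk W * y = FreeGroup.mk (X ++ W ++ Y) := by
    conv_lhs => rw [← FreeGroup.mk_toWord (x := x), ← FreeGroup.mk_toWord (x := y)]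
    rw [FreeGroup.mul_mk, FreeGroup.mul_mk]
  have hZword : FreeGroup.toWord (x * FreeGroup.mk W * y) = X ++ W ++ Y := by
    rw [hprod, FreeGroup.toWord_mk, hZred]
  have hinvlen : (FreeGroup.invRev U).length = L := FreeGroup.invRev_length
  have hinv0 : (FreeGroup.invRev U)[0]'(by omega) = linv (U[L-1]'(by omega)) := by
    unfold FreeGroup.invRev
    rw [List.getElem_reverse]
    rw [List.getElem_map]
    have hidx : (List.map (fun g : Fin r × Bool => (g.1, !g.2)) U).length - 1 - 0 = L - 1 := by
      simp only [List.length_map]; omega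
    have e := getElem_eq_of_idx (l := U) hidx (by simp only [List.length_map]; omega) (by omega)
    unfold linv
    rw [e]
  have hinvL : (FreeGroup.invRev U)[L-1]'(by omega) = linv (U[0]'(by omega)) := by
    unfold FreeGroup.invRev
    rw [List.getElem_reverse]
    rw [List.getElem_map]
    have hidx : (List.map (fun g : Fin r × Bool => (g.1, !g.2)) U).length - 1 - (L - 1) = 0 := by
      simp only [List.length_map]; omega
    have e := getElem_eq_of_idx (l := U) hidx (by simp only [List.length_map]; omega) (by omega)
    unfold linv
    rw [e]
  refine ⟨FreeGroup.mk W, ?_, ?_, ?_, ?_, ?_⟩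
  · rw [hWword, hWlen]; omega
  · rw [hWword, hWlen]; omega
  · rw [hZword, hWword]
    simp only [List.length_append]
  · rw [hZword]
    exact occCount_append rfl (by omega)
      (block_aux rfl hL2 (Ne.symm hc1) (Ne.symm hc2) (Ne.symm hd1))
  · rw [hZword, FreeGroup.toWord_inv]
    exact occCount_append hinvlen (by omega)
      (block_aux hinvlen hL2 (by rw [hinv0]; exact Ne.symm hc4)
        (by rw [hinvL]; exact Ne.symm hc3) (by rw [hinvL]; exact Ne.symm hd2))
end

section
/- Let G be a group, let Λ ⊆ G with 1 ∈ Λ, and let N : Λ → [0,∞) with N(1) = 0. For r > 0 set B_r := {x ∈ Λ : N(x) < r}, and assume each B_r is finite. Suppose there are constants C₀ ≥ 1 and δ ∈ ℕ with |B_r| ≤ C₀·r^δ for all r > 0, and constants C₁, C₂ ≥ 1 and K ≥ 0 with |B_r·B_r·B_r| ≤ C₂·|B_{C₁·r + K}| for all r > 0, where B_r·B_r·B_r is the triple product set in G. Then there exist a constant C ≥ 1 and an unbounded strictly increasing sequence (r_n)_{n∈ℕ} of positive real numbers such that |B_{r_n}·B_{r_n}·B_{r_n}| ≤ C·|B_{r_n}|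 for all n ∈ ℕ. -/
open Pointwise

/-- Pigeonhole for polynomially growing balls with small tripling: there is a constant `C` and
an unbounded increasing sequence of radii `r_n` along which the balls `B_{r_n}` satisfy
`|B_{r_n}³| ≤ C·|B_{r_n}|`. -/
theorem tripling_radii_sequence {G : Type*} [Group G] (Λ : Set G) (hone : (1 : G) ∈ Λ)
    (N : G → ℝ) (hN1 : N 1 = 0) (hNnonneg : ∀ x ∈ Λ, 0 ≤ N x)
    (hfin : ∀ r : ℝ, 0 < r → {x ∈ Λ | N x < r}.Finite)
    (C₀ : ℝ) (hC₀ : 1 ≤ C₀) (δ : ℕ)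
    (hpoly : ∀ r : ℝ, 0 < r → ({x ∈ Λ | N x < r}.ncard : ℝ) ≤ C₀ * r ^ δ)
    (C₁ C₂ : ℝ) (hC₁ : 1 ≤ C₁) (hC₂ : 1 ≤ C₂) (K : ℝ) (hK : 0 ≤ K)
    (htrip : ∀ r : ℝ, 0 < r →
        (({x ∈ Λ | N x < r} * {x ∈ Λ | N x < r} * {x ∈ Λ | N x < r}).ncard : ℝ) ≤
          C₂ * ({x ∈ Λ | N x < C₁ * r + K}.ncard : ℝ)) :
    ∃ C : ℝ, 1 ≤ C ∧ ∃ rs : ℕ → ℝ, StrictMono rs ∧ (∀ n : ℕ, 0 < rs n) ∧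
      Filter.Tendsto rs Filter.atTop Filter.atTop ∧
      ∀ n : ℕ,
        (({x ∈ Λ | N x < rs n} * {x ∈ Λ | N x < rs n} * {x ∈ Λ | N x < rs n}).ncard : ℝ) ≤
          C * ({x ∈ Λ | N x < rs n}.ncard : ℝ) := by
  set M := C₁ + K with hM
  have hM1 : (1:ℝ) ≤ M := by linarith
  have hMpow : (1:ℝ) ≤ M ^ δ := one_le_pow₀ hM1
  set D := 2 * M ^ δ with hD
  have hD2 : (2:ℝ) ≤ D := by nlinarith
  have hcard1 : ∀ r : ℝ, 0 < r → (1:ℝ) ≤ ({x ∈ Λ | N x < r}.ncard : ℝ) := by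
    intro r hr
    have h0 : 0 < {x ∈ Λ | N x < r}.ncard :=
      (Set.ncard_pos (hfin r hr)).mpr ⟨1, hone, by rw [hN1]; exact hr⟩
    exact_mod_cast h0
  have key : ∀ R : ℝ, ∃ r, max R 1 ≤ r ∧
      (({x ∈ Λ | N x < r} * {x ∈ Λ | N x < r} * {x ∈ Λ | N x < r}).ncard : ℝ) ≤
        C₂ * D * ({x ∈ Λ | N x < r}.ncard : ℝ) := by
    intro R₀
    set R := max R₀ 1 with hRdef
    have hR : (1:ℝ) ≤ R := le_max_right _ _
    by_contra hcon
    push_neg at hcon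
    set g : ℕ → ℝ := fun k => Nat.rec R (fun _ p => C₁ * p + K) k with hg
    have hgsucc : ∀ k, g (k+1) = C₁ * g k + K := fun _ => rfl
    have hgR : ∀ k, R ≤ g k := by
      intro k; induction k with
      | zero => exact le_refl R
      | succ k ih => rw [hgsucc]; nlinarith
    have hgpos : ∀ k, 0 < g k := fun k => lt_of_lt_of_le (by linarith) (hgR k)
    have hg1 : ∀ k, 1 ≤ g k := fun k => le_trans hR (hgR k)
    have hgub : ∀ k, g k ≤ M ^ k * R := by
      intro k; induction k with
      | zero => simp only [pow_zero, one_mul]; exact le_refl R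
      | succ k ih =>
          rw [hgsucc, pow_succ]
          have : C₁ * g k + K ≤ M * g k := by nlinarith [hg1 k]
          have h2 : M * g k ≤ M * (M ^ k * R) :=
            mul_le_mul_of_nonneg_left ih (by linarith)
          calc C₁ * g k + K ≤ M * (M ^ k * R) := le_trans this h2
            _ = M ^ k * M * R := by ring
    have hlb : ∀ k, D ^ k ≤ ({x ∈ Λ | N x < g k}.ncard : ℝ) := by
      intro k; induction k with
      | zero => have hg0 : g 0 = R := rfl; rw [hg0]; simpa using hcard1 R (by linarith)
      | succ k ih =>
          have h1 := hcon (g k) (hgR k)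
          have h2 := htrip (g k) (hgpos k)
          have h3 : C₂ * (D * ({x ∈ Λ | N x < g k}.ncard : ℝ)) <
              C₂ * ({x ∈ Λ | N x < C₁ * g k + K}.ncard : ℝ) := by nlinarith
          have h4 : D * ({x ∈ Λ | N x < g k}.ncard : ℝ) <
              ({x ∈ Λ | N x < C₁ * g k + K}.ncard : ℝ) :=
            lt_of_mul_lt_mul_left h3 (by linarith)
          rw [hgsucc]
          calc D ^ (k+1) = D * D ^ k := by ring
            _ ≤ D * ({x ∈ Λ | N x < g k}.ncard : ℝ) :=
                mul_le_mul_of_nonneg_left ih (by linarith)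
            _ ≤ ({x ∈ Λ | N x < C₁ * g k + K}.ncard : ℝ) := le_of_lt h4
    obtain ⟨k, hk⟩ := pow_unbounded_of_one_lt (C₀ * R ^ δ) (one_lt_two (α := ℝ))
    have h1 := hlb k
    have h2 := hpoly (g k) (hgpos k)
    have hRpos : (0:ℝ) < R := by linarith
    have h3 : (g k) ^ δ ≤ (M ^ k * R) ^ δ :=
      pow_le_pow_left₀ (le_of_lt (hgpos k)) (hgub k) δ
    have h4 : D ^ k ≤ C₀ * (M ^ k * R) ^ δ := by
      calc D ^ k ≤ ({x ∈ Λ | N x < g k}.ncard : ℝ) := h1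
        _ ≤ C₀ * (g k) ^ δ := h2
        _ ≤ C₀ * (M ^ k * R) ^ δ := mul_le_mul_of_nonneg_left h3 (by linarith)
    have hexp : (M ^ k * R) ^ δ = (M ^ δ) ^ k * R ^ δ := by
      rw [mul_pow, ← pow_mul, ← pow_mul, Nat.mul_comm]
    have hDk : D ^ k = 2 ^ k * (M ^ δ) ^ k := by rw [hD, mul_pow]
    have hMdk : (0:ℝ) < (M ^ δ) ^ k := by positivity
    have h5 : 2 ^ k * (M ^ δ) ^ k ≤ (C₀ * R ^ δ) * (M ^ δ) ^ k := by
      rw [← hDk]; calc D ^ k ≤ C₀ * (M ^ k * R) ^ δ := h4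
        _ = (C₀ * R ^ δ) * (M ^ δ) ^ k := by rw [hexp]; ring
    have h6 : (2:ℝ) ^ k ≤ C₀ * R ^ δ := le_of_mul_le_mul_right h5 hMdk
    linarith
  choose f hf1 hf2 using key
  refine ⟨C₂ * D, by nlinarith, ?_⟩
  set rs : ℕ → ℝ := fun n => Nat.rec (f 0) (fun _ p => f (p + 1)) n with hrs
  have hrs0 : rs 0 = f 0 := rfl
  have hrssucc : ∀ n, rs (n+1) = f (rs n + 1) := fun _ => rfl
  have hrs1 : ∀ n, 1 ≤ rs n := by
    intro n; cases n with
    | zero => exact le_trans (le_max_right _ _) (hf1 0)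
    | succ n => exact le_trans (le_max_right _ _) (hf1 (rs n + 1))
  have hlt : ∀ n, rs n < rs (n+1) := by
    intro n
    have := le_trans (le_max_left (rs n + 1) 1) (hf1 (rs n + 1))
    rw [hrssucc]; linarith
  have hmono : StrictMono rs := strictMono_nat_of_lt_succ hlt
  refine ⟨rs, hmono, fun n => lt_of_lt_of_le one_pos (hrs1 n), ?_, ?_⟩
  · have hge : ∀ n, rs 0 + n ≤ rs n := by
      intro n; induction n with
      | zero => simp
      | succ n ih =>
          have := hlt n
          have h2 := le_trans (le_max_left (rs n + 1) 1) (hf1 (rs n + 1))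
          rw [hrssucc]; push_cast; linarith
    exact Filter.tendsto_atTop_mono hge
      (Filter.tendsto_atTop_add_const_left _ _ tendsto_natCast_atTop_atTop)
  · intro n; cases n with
    | zero => exact hf2 0
    | succ n => rw [hrssucc]; exact hf2 (rs n + 1)
end
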